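/- Let f : ℕ → ℕ. Suppose that for every domain X' and every binary concept class H ⊆ {0,1}^{X'} with finite VC dimension d, there exists an exact realizable sample compression scheme for H of size at most f(d) that is either a proper compression scheme or a majority vote compression scheme. Then there is a universal constant c > 0 such that for every class C ⊆ [0,1]^X with finite pseudo-dimension d_P, every ε ∈ (0,1), and every p ∈ [1,∞], there exists an ε-approximate realizable compression scheme for C with respect to the ℓ_p loss of size at most c·f(d_P). -/
import Mathlib


universe u

/-- A finite sample `S` is realizable by the concept class `C`. -/
def Realizable {X Y : Type*} (C : Set (X → Y)) (S : List (X × Y)) : Prop :=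
  ∃ c ∈ C, ∀ p ∈ S, c p.1 = p.2

/-- `(κ, ρ)` is an exact realizable sample compression scheme for `C` of size at most `k`. -/
def IsExactRealizableScheme {X Y : Type*} (C : Set (X → Y)) (k : ℕ)
    (κ : List (X × Y) → List (X × Y) × List Bool)
    (ρ : List (X × Y) × List Bool → X → Y) : Prop :=
  (∀ S : List (X × Y), (κ S).1 ⊆ S) ∧
  (∀ S : List (X × Y), Realizable C S → (κ S).1.length + (κ S).2.length ≤ k) ∧
  (∀ S : List (X × Y), Realizable C S → ∀ p ∈ S, ρ (κ S) p.1 = p.2)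

/-- A proper compression scheme: on realizable samples the reconstruction
returns a concept of the class. -/
def IsProperScheme {X Y : Type*} (C : Set (X → Y))
    (κ : List (X × Y) → List (X × Y) × List Bool)
    (ρ : List (X × Y) × List Bool → X → Y) : Prop :=
  ∀ S : List (X × Y), Realizable C S → ρ (κ S) ∈ C

/-- `g` is a majority vote of finitely many (a nonempty finite multiset of) concepts
from the binary class `H`, with ties broken toward `0`. -/
def IsMajorityOf {X' : Type*} (H : Set (X' → Bool)) (g : X' → Bool) : Prop :=
  ∃ L : List (X' → Bool), L ≠ [] ∧ (∀ h ∈ L, h ∈ H) ∧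
    ∀ x, g x = decide (L.length < 2 * L.countP (fun h => h x))

/-- A majority vote compression scheme for a binary class `H`. -/
def IsMajorityVoteScheme {X' : Type*} (H : Set (X' → Bool))
    (κ : List (X' × Bool) → List (X' × Bool) × List Bool)
    (ρ : List (X' × Bool) × List Bool → X' → Bool) : Prop :=
  ∀ S : List (X' × Bool), Realizable H S → IsMajorityOf H (ρ (κ S))

/-- `n` points of `X` are shattered by the binary concept class `H ⊆ {0,1}^X`. -/
def ShattersN {X : Type*} (H : Set (X → Bool)) (n : ℕ) : Prop :=
  ∃ x : Fin n → X, ∀ b : Fin n → Bool, ∃ h ∈ H, ∀ i, h (x i) = b i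

/-- `H` has (finite) VC dimension exactly `d`. -/
def IsVCDim {X : Type*} (H : Set (X → Bool)) (d : ℕ) : Prop :=
  ShattersN H d ∧ ¬ ShattersN H (d + 1)

/-- `n` points of `X` are P-shattered by the real-valued class `C ⊆ [0,1]^X`. -/
def PShattersN {X : Type*} (C : Set (X → ℝ)) (n : ℕ) : Prop :=
  ∃ (x : Fin n → X) (y : Fin n → ℝ), (∀ i, y i ∈ Set.Icc (0:ℝ) 1) ∧
    ∀ b : Fin n → Bool, ∃ c ∈ C, ∀ i, (c (x i) ≤ y i ↔ b i = true)

/-- `C` has (finite) pseudo-dimension exactly `d`. -/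
def IsPseudoDim {X : Type*} (C : Set (X → ℝ)) (d : ℕ) : Prop :=
  PShattersN C d ∧ ¬ PShattersN C (d + 1)

/-- An `ε`-approximate realizable `ℓ_∞` compression scheme for `C ⊆ [0,1]^X`
of size at most `k`. -/
def IsApproxLinfScheme {X : Type*} (C : Set (X → ℝ)) (k : ℕ) (ε : ℝ)
    (κ : List (X × ℝ) → List (X × ℝ) × List Bool)
    (ρ : List (X × ℝ) × List Bool → X → ℝ) : Prop :=
  (∀ S : List (X × ℝ), (κ S).1 ⊆ S) ∧
  (∀ T x, ρ T x ∈ Set.Icc (0:ℝ) 1) ∧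
  (∀ S : List (X × ℝ), Realizable C S → (κ S).1.length + (κ S).2.length ≤ k) ∧
  (∀ S : List (X × ℝ), Realizable C S → ∀ p ∈ S, |ρ (κ S) p.1 - p.2| ≤ ε)

/-- An `ε`-approximate realizable `ℓ_p` compression scheme for `C ⊆ [0,1]^X`
of size at most `k`. -/
def IsApproxLpScheme {X : Type*} (C : Set (X → ℝ)) (k : ℕ) (p ε : ℝ)
    (κ : List (X × ℝ) → List (X × ℝ) × List Bool)
    (ρ : List (X × ℝ) × List Bool → X → ℝ) : Prop :=
  (∀ S : List (X × ℝ), (κ S).1 ⊆ S) ∧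
  (∀ T x, ρ T x ∈ Set.Icc (0:ℝ) 1) ∧
  (∀ S : List (X × ℝ), Realizable C S → (κ S).1.length + (κ S).2.length ≤ k) ∧
  (∀ S : List (X × ℝ), Realizable C S →
    (S.map (fun q => |ρ (κ S) q.1 - q.2| ^ p)).sum ≤ ε * S.length)

namespace RegAux

noncomputable section

variable {X : Type u}

/-- Encode a real-valued sample as a binary (subgraph) sample: for each point we
add the thresholds `y` (label `true`) and `y - ε` (label `false`). -/
def regEnc (ε : ℝ) (S : List (X × ℝ)) : List ((X × ℝ) × Bool) :=
  S.flatMap fun p => [((p.1, p.2), true), ((p.1, p.2 - ε), false)]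

/-- The real-valued compression function built from a binary one. -/
def regKap (ε : ℝ)
    (κb : List ((X × ℝ) × Bool) → List ((X × ℝ) × Bool) × List Bool)
    (S : List (X × ℝ)) : List (X × ℝ) × List Bool :=
  ((κb (regEnc ε S)).1.map (fun q => (q.1.1, if q.2 then q.1.2 else q.1.2 + ε)),
   (κb (regEnc ε S)).2 ++ (κb (regEnc ε S)).1.map Prod.snd)

/-- Decode a real compressed pair back into a binary compressed pair. -/
def regDecode (ε : ℝ) (T : List (X × ℝ) × List Bool) :
    List ((X × ℝ) × Bool) × List Bool :=
  ((T.1.zip (T.2.drop (T.2.length - T.1.length))).map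
      (fun q => ((q.1.1, if q.2 then q.1.2 else q.1.2 - ε), q.2)),
   T.2.take (T.2.length - T.1.length))

/-- The real-valued reconstruction function built from a binary one. -/
def regRho (ε : ℝ)
    (ρb : List ((X × ℝ) × Bool) × List Bool → X × ℝ → Bool)
    (T : List (X × ℝ) × List Bool) (x : X) : ℝ :=
  sInf {t | t ∈ Set.Icc (0:ℝ) 1 ∧ ρb (regDecode ε T) (x, t) = true}

lemma regDecode_kap (ε : ℝ)
    (κb : List ((X × ℝ) × Bool) → List ((X × ℝ) × Bool) × List Bool)
    (S : List (X × ℝ)) :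
    regDecode ε (regKap ε κb S) = κb (regEnc ε S) := by
  unfold regDecode regKap
  generalize κb (regEnc ε S) = P
  obtain ⟨M, a⟩ := P
  simp only [List.length_map, List.length_append, Nat.add_sub_cancel]
  rw [List.drop_left, List.take_left, List.zip_map', List.map_map]
  simp only [Prod.mk.injEq]
  refine ⟨?_, trivial⟩
  conv_rhs => rw [← List.map_id M]
  apply List.map_congr_left
  rintro ⟨⟨x0, t0⟩, b0⟩ -
  cases b0 <;> simp

end

end RegAux

/-- Regression reduction with proper / majority-vote binary compression schemes:
if every binary class of finite VC dimension `d` has an exact realizable compression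
scheme of size at most `f d` that is proper or a majority vote scheme, then there is a
universal constant `c > 0` such that every class `C ⊆ [0,1]^X` of finite
pseudo-dimension `d_P` admits, for every `ε ∈ (0,1)` and every `p ∈ [1,∞]`
(the `ℓ_∞` case stated separately), an `ε`-approximate realizable `ℓ_p` scheme of size
at most `c·f(d_P)`. -/

theorem regression_approx_compression_of_proper_or_majority (f : ℕ → ℕ)
    (hbin : ∀ (X' : Type u) (H : Set (X' → Bool)) (d : ℕ), IsVCDim H d →
      ∃ κ ρ, IsExactRealizableScheme H (f d) κ ρ ∧
        (IsProperScheme H κ ρ ∨ IsMajorityVoteScheme H κ ρ)) :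
    ∃ c : ℝ, 0 < c ∧
      ∀ (X : Type u) (C : Set (X → ℝ)),
        (∀ g ∈ C, ∀ x, g x ∈ Set.Icc (0:ℝ) 1) →
        ∀ dP : ℕ, IsPseudoDim C dP →
        ∀ ε : ℝ, 0 < ε → ε < 1 →
          (∃ k : ℕ, (k : ℝ) ≤ c * f dP ∧ ∃ κ ρ, IsApproxLinfScheme C k ε κ ρ) ∧
          (∀ p : ℝ, 1 ≤ p →
            ∃ k : ℕ, (k : ℝ) ≤ c * f dP ∧ ∃ κ ρ, IsApproxLpScheme C k p ε κ ρ) := by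
  classical
  refine ⟨2, by norm_num, ?_⟩
  intro X C hC dP hdP ε hε0 hε1
  set H : Set (X × ℝ → Bool) :=
    (fun (c : X → ℝ) (q : X × ℝ) => decide (c q.1 ≤ q.2)) '' C with hHdef
  -- `H` has VC dimension exactly `dP`
  have hvc : IsVCDim H dP := by
    constructor
    · obtain ⟨x, y, hy, hsh⟩ := hdP.1
      refine ⟨fun i => (x i, y i), fun b => ?_⟩
      obtain ⟨c, hcC, hcb⟩ := hsh b
      refine ⟨_, ⟨c, hcC, rfl⟩, fun i => ?_⟩
      have hthis := hcb i
      cases hbi : b i <;> simp [hbi] at hthis ⊢ <;> exact hthis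
    · rintro ⟨z, hz⟩
      apply hdP.2
      refine ⟨fun i => (z i).1, fun i => (z i).2, ?_, ?_⟩
      · intro i
        obtain ⟨h1, hh1, hb1⟩ := hz (fun _ => true)
        obtain ⟨h0, hh0, hb0⟩ := hz (fun _ => false)
        rw [hHdef] at hh1 hh0
        obtain ⟨c1, hc1, rfl⟩ := hh1
        obtain ⟨c0, hc0, rfl⟩ := hh0
        have e1 := hb1 i
        have e0 := hb0 i
        simp only [decide_eq_true_eq, decide_eq_false_iff_not] at e1 e0
        refine ⟨le_trans (hC c1 hc1 (z i).1).1 e1, ?_⟩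
        exact le_of_lt (lt_of_lt_of_le (not_le.mp e0) (hC c0 hc0 (z i).1).2)
      · intro b
        obtain ⟨h, hh, hb⟩ := hz b
        rw [hHdef] at hh
        obtain ⟨c, hcC, rfl⟩ := hh
        refine ⟨c, hcC, fun i => ?_⟩
        rw [← hb i]
        simp
  obtain ⟨κb, ρb, ⟨hbsub, hbsize, hbexact⟩, hPM⟩ := hbin (X × ℝ) H dP hvc
  -- common facts about the derived real-valued scheme
  have hsubset : ∀ S : List (X × ℝ), (RegAux.regKap ε κb S).1 ⊆ S := by
    intro S q hq
    unfold RegAux.regKap at hq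
    obtain ⟨q0, hq0, rfl⟩ := List.mem_map.mp hq
    have hq0' : q0 ∈ RegAux.regEnc ε S := hbsub (RegAux.regEnc ε S) hq0
    unfold RegAux.regEnc at hq0'
    obtain ⟨p, hp, hmem⟩ := List.mem_flatMap.mp hq0'
    simp only [List.mem_cons, List.mem_singleton, List.not_mem_nil, or_false] at hmem
    rcases hmem with rfl | rfl
    · simpa using hp
    · simpa [sub_add_cancel] using hp
  have hrange : ∀ (T : List (X × ℝ) × List Bool) (x : X),
      RegAux.regRho ε ρb T x ∈ Set.Icc (0:ℝ) 1 := by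
    intro T x
    unfold RegAux.regRho
    constructor
    · exact Real.sInf_nonneg (fun t ht => ht.1.1)
    · by_cases hne : {t | t ∈ Set.Icc (0:ℝ) 1 ∧ ρb (RegAux.regDecode ε T) (x, t) = true}.Nonempty
      · obtain ⟨t, ht⟩ := hne
        exact le_trans (csInf_le ⟨0, fun u hu => hu.1.1⟩ ht) ht.1.2
      · rw [Set.not_nonempty_iff_eq_empty.mp hne, Real.sInf_empty]
        norm_num
  have hBreal : ∀ S : List (X × ℝ), Realizable C S →
      Realizable H (RegAux.regEnc ε S) := by
    rintro S ⟨c, hcC, hc⟩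
    refine ⟨fun q => decide (c q.1 ≤ q.2), ⟨c, hcC, rfl⟩, ?_⟩
    intro q hq
    unfold RegAux.regEnc at hq
    obtain ⟨p, hp, hmem⟩ := List.mem_flatMap.mp hq
    have hcp := hc p hp
    simp only [List.mem_cons, List.mem_singleton, List.not_mem_nil, or_false] at hmem
    rcases hmem with rfl | rfl
    · simp [hcp]
    · simp only [decide_eq_false_iff_not, hcp]
      intro habs
      linarith
  have hsize : ∀ S : List (X × ℝ), Realizable C S →
      (RegAux.regKap ε κb S).1.length + (RegAux.regKap ε κb S).2.length ≤ 2 * f dP := by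
    intro S hS
    have h1 := hbsize (RegAux.regEnc ε S) (hBreal S hS)
    unfold RegAux.regKap
    simp only [List.length_map, List.length_append]
    omega
  -- main accuracy estimate
  have hmain : ∀ S : List (X × ℝ), Realizable C S →
      ∀ p ∈ S, |RegAux.regRho ε ρb (RegAux.regKap ε κb S) p.1 - p.2| ≤ ε := by
    intro S hS p hp
    have hBr := hBreal S hS
    obtain ⟨c, hcC, hc⟩ := hS
    have hcp : c p.1 = p.2 := hc p hp
    have hyIcc : p.2 ∈ Set.Icc (0:ℝ) 1 := hcp ▸ hC c hcC p.1
    have hmem1 : ((p.1, p.2), true) ∈ RegAux.regEnc ε S := by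
      unfold RegAux.regEnc
      exact List.mem_flatMap.mpr ⟨p, hp, by simp⟩
    have hmem0 : ((p.1, p.2 - ε), false) ∈ RegAux.regEnc ε S := by
      unfold RegAux.regEnc
      exact List.mem_flatMap.mpr ⟨p, hp, by simp⟩
    have gtrue : ρb (κb (RegAux.regEnc ε S)) (p.1, p.2) = true :=
      hbexact (RegAux.regEnc ε S) hBr _ hmem1
    have gfalse : ρb (κb (RegAux.regEnc ε S)) (p.1, p.2 - ε) = false :=
      hbexact (RegAux.regEnc ε S) hBr _ hmem0
    have hmono : ∀ (x : X) (t t' : ℝ), t ≤ t' →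
        ρb (κb (RegAux.regEnc ε S)) (x, t) = true →
        ρb (κb (RegAux.regEnc ε S)) (x, t') = true := by
      rcases hPM with hprop | hmaj
      · intro x t t' htt hgt
        have hm := hprop (RegAux.regEnc ε S) hBr
        rw [hHdef] at hm
        obtain ⟨c', hc'C, heq⟩ := hm
        rw [← heq] at hgt ⊢
        simp only [decide_eq_true_eq] at hgt ⊢
        exact le_trans hgt htt
      · intro x t t' htt hgt
        obtain ⟨L, hL0, hLH, hLmaj⟩ := hmaj (RegAux.regEnc ε S) hBr
        rw [hLmaj] at hgt ⊢
        simp only [decide_eq_true_eq] at hgt ⊢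
        refine lt_of_lt_of_le hgt (Nat.mul_le_mul_left 2 ?_)
        apply List.countP_mono_left
        intro h hhL hh
        have hhH := hLH h hhL
        rw [hHdef] at hhH
        obtain ⟨c'', hc''C, rfl⟩ := hhH
        simp only [decide_eq_true_eq] at hh ⊢
        exact le_trans hh htt
    have hrec : RegAux.regRho ε ρb (RegAux.regKap ε κb S) p.1
        = sInf {t | t ∈ Set.Icc (0:ℝ) 1 ∧ ρb (κb (RegAux.regEnc ε S)) (p.1, t) = true} := by
      unfold RegAux.regRho
      simp only [RegAux.regDecode_kap]
    rw [hrec]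
    set s := {t | t ∈ Set.Icc (0:ℝ) 1 ∧ ρb (κb (RegAux.regEnc ε S)) (p.1, t) = true} with hsdef
    have hmemInf : p.2 ∈ s := ⟨hyIcc, gtrue⟩
    have hbdd : BddBelow s := ⟨0, fun u hu => hu.1.1⟩
    have hup : sInf s ≤ p.2 := csInf_le hbdd hmemInf
    have hlow : p.2 - ε ≤ sInf s := by
      apply le_csInf ⟨p.2, hmemInf⟩
      intro t ht
      by_contra hlt
      push_neg at hlt
      have habs := hmono p.1 t (p.2 - ε) (le_of_lt hlt) ht.2
      rw [gfalse] at habs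
      exact Bool.false_ne_true habs
    rw [abs_le]
    constructor <;> linarith
  have hconstsum : ∀ (l : List (X × ℝ)), (l.map fun _ => ε).sum = ε * l.length := by
    intro l
    induction l with
    | nil => simp
    | cons a l ih =>
      simp only [List.map_cons, List.sum_cons, ih, List.length_cons]
      push_cast
      ring
  constructor
  · refine ⟨2 * f dP, by push_cast; exact le_rfl,
      RegAux.regKap ε κb, RegAux.regRho ε ρb, hsubset, hrange, hsize, hmain⟩
  · intro p hp1
    refine ⟨2 * f dP, by push_cast; exact le_rfl,
      RegAux.regKap ε κb, RegAux.regRho ε ρb, hsubset, hrange, hsize, ?_⟩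
    intro S hS
    have hterm : ∀ q ∈ S,
        |RegAux.regRho ε ρb (RegAux.regKap ε κb S) q.1 - q.2| ^ p ≤ ε := by
      intro q hq
      have h1 := hmain S hS q hq
      calc |RegAux.regRho ε ρb (RegAux.regKap ε κb S) q.1 - q.2| ^ p
          ≤ ε ^ p := Real.rpow_le_rpow (abs_nonneg _) h1 (by linarith)
        _ ≤ ε ^ (1:ℝ) := Real.rpow_le_rpow_of_exponent_ge hε0 (le_of_lt hε1) hp1
        _ = ε := Real.rpow_one ε
    calc (S.map fun q => |RegAux.regRho ε ρb (RegAux.regKap ε κb S) q.1 - q.2| ^ p).sum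
        ≤ (S.map fun _ => ε).sum := List.sum_le_sum hterm
      _ = ε * S.length := hconstsum S
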